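/- Secure sketch for edit distance: let F be a finite alphabet of size F. For any n, any shingle length c with 1 ≤ c ≤ n, any t, and any m, there exists an average-case (Edit_F(n), m, m − ⌈n/c⌉·log₂(n−c+1) − (2c−1)·t·⌈log₂(F^c + 1)⌉, t)-secure sketch. -/

import Mathlib

open Finset

/-- A probability distribution on a finite type. -/
def IsDist {α : Type*} [Fintype α] (p : α → ℝ) : Prop :=
  (∀ a, 0 ≤ p a) ∧ ∑ a, p a = 1

/-- Average min-entropy `H̃∞(A | B)`. -/
noncomputable def avgMinEntropy {α β : Type*} [Fintype α] [Fintype β] (p : α × β → ℝ) : ℝ :=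
  - Real.logb 2 (∑ b, ⨆ a, p (a, b))

/-- A single edit step on strings (lists): insertion or deletion of one character. -/
def EditStep {F : Type} (u v : List F) : Prop :=
  (∃ (l : List F) (x : F) (r : List F), u = l ++ r ∧ v = l ++ x :: r) ∨
  (∃ (l : List F) (x : F) (r : List F), u = l ++ x :: r ∧ v = l ++ r)

/-- `EditLe t u v` means the edit distance (insertions and deletions) between `u` and `v`
is at most `t`. -/
def EditLe {F : Type} : ℕ → List F → List F → Prop
  | 0, u, v => u = v
  | t + 1, u, v => EditLe t u v ∨ ∃ z, EditStep u z ∧ EditLe t z v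

namespace EditAux
open Finset List

theorem editStep_symm {F : Type} {u v : List F} (h : EditStep u v) : EditStep v u := by
  rcases h with ⟨l, x, r, h1, h2⟩ | ⟨l, x, r, h1, h2⟩
  · exact Or.inr ⟨l, x, r, h2, h1⟩
  · exact Or.inl ⟨l, x, r, h2, h1⟩

theorem editLe_mono {F : Type} {t : ℕ} {u v : List F} (h : EditLe t u v) :
    EditLe (t + 1) u v := Or.inl h

theorem editLe_trans {F : Type} {a b : ℕ} {u v w : List F}
    (h1 : EditLe a u v) (h2 : EditLe b v w) : EditLe (a + b) u w := by
  induction a generalizing u with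
  | zero => rw [Nat.zero_add]; exact (show u = v from h1) ▸ h2
  | succ a ih =>
    rw [Nat.succ_add]
    rcases h1 with h | ⟨z, hs, h⟩
    · exact Or.inl (ih h)
    · exact Or.inr ⟨z, hs, ih h⟩

theorem editLe_step_right {F : Type} {t : ℕ} {u v w : List F}
    (h : EditLe t u v) (hs : EditStep v w) : EditLe (t + 1) u w := by
  induction t generalizing u with
  | zero => exact Or.inr ⟨w, (show u = v from h) ▸ hs, rfl⟩
  | succ t ih =>
    rcases h with h | ⟨z, hz, h⟩
    · exact Or.inl (ih h)
    · exact Or.inr ⟨z, hz, ih h⟩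

theorem editLe_symm {F : Type} {t : ℕ} {u v : List F} (h : EditLe t u v) :
    EditLe t v u := by
  induction t generalizing u v with
  | zero => exact (show u = v from h).symm
  | succ t ih =>
    rcases h with h | ⟨z, hs, h⟩
    · exact Or.inl (ih h)
    · exact editLe_step_right (ih h) (editStep_symm hs)

theorem drop_middle {F : Type} {s l r : List F} {x : F} (h : s <+ l ++ x :: r) :
    ∃ s', s' <+ s ∧ s' <+ l ++ r ∧ s.length ≤ s'.length + 1 := by
  rw [List.sublist_append_iff] at h
  obtain ⟨s₁, s₂, rfl, h1, h2⟩ := h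
  rw [List.sublist_cons_iff] at h2
  rcases h2 with h2 | ⟨s₂', rfl, h2⟩
  · exact ⟨s₁ ++ s₂, List.Sublist.refl _, List.Sublist.append h1 h2, Nat.le_succ _⟩
  · refine ⟨s₁ ++ s₂', ?_, List.Sublist.append h1 h2, by simp; omega⟩
    exact List.Sublist.append (List.Sublist.refl _) (List.sublist_cons_self _ _)

theorem exists_common_sublist {F : Type} {d : ℕ} {u v : List F} (h : EditLe d u v) :
    ∃ s : List F, s <+ u ∧ s <+ v ∧ u.length + v.length ≤ d + 2 * s.length := by
  induction d generalizing u with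
  | zero =>
    exact ⟨u, List.Sublist.refl _, (show u = v from h) ▸ List.Sublist.refl _, by
      rw [show u = v from h]; omega⟩
  | succ d ih =>
    rcases h with h | ⟨z, hs, h⟩
    · obtain ⟨s, h1, h2, h3⟩ := ih h
      exact ⟨s, h1, h2, by omega⟩
    · obtain ⟨s, hsz, hsv, hlen⟩ := ih h
      rcases hs with ⟨l, x, r, rfl, rfl⟩ | ⟨l, x, r, rfl, rfl⟩
      · -- u = l ++ r, z = l ++ x :: r (insertion)
        obtain ⟨s', hs's, hs'u, hl⟩ := drop_middle hsz
        refine ⟨s', hs'u, hs's.trans hsv, ?_⟩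
        simp only [List.length_append, List.length_cons] at hlen ⊢
        omega
      · -- u = l ++ x :: r, z = l ++ r (deletion)
        refine ⟨s, hsz.trans ?_, hsv, ?_⟩
        · exact List.Sublist.append (List.Sublist.refl _) (List.sublist_cons_self _ _)
        · simp only [List.length_append, List.length_cons] at hlen ⊢
          omega


def gcol (K : ℕ) (nbr : ℕ → ℕ → Bool) : ℕ → ℕ
  | i =>
    let used : Finset ℕ := ((Finset.range i).attach.filter
      (fun j => nbr j.1 i)).image (fun j => gcol K nbr j.1)
    if h : ((Finset.range K) \ used).Nonempty then (Finset.range K \ used).min' h else 0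
termination_by i => i
decreasing_by exact Finset.mem_range.mp j.2

theorem gcol_spec (K : ℕ) (nbr : ℕ → ℕ → Bool)
    (hdeg : ∀ i, (((Finset.range i).attach.filter (fun j => nbr j.1 i)).card < K)) :
    ∀ i, gcol K nbr i < K ∧ ∀ j < i, nbr j i → gcol K nbr j ≠ gcol K nbr i := by
  intro i
  rw [gcol]
  set used : Finset ℕ := ((Finset.range i).attach.filter
      (fun j => nbr j.1 i)).image (fun j => gcol K nbr j.1) with hused
  have hcard : used.card < K := lt_of_le_of_lt Finset.card_image_le (hdeg i)
  have hne : ((Finset.range K) \ used).Nonempty := by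
    by_contra h
    rw [Finset.not_nonempty_iff_eq_empty, Finset.sdiff_eq_empty_iff_subset] at h
    have := Finset.card_le_card h
    simp only [Finset.card_range] at this
    omega
  rw [dif_pos hne]
  constructor
  · have := Finset.min'_mem _ hne
    exact Finset.mem_range.mp (Finset.mem_sdiff.mp this).1
  · intro j hj hnbr heq
    have hmem : gcol K nbr j ∈ used := by
      rw [hused]
      exact Finset.mem_image.mpr ⟨⟨j, Finset.mem_range.mpr hj⟩,
        Finset.mem_filter.mpr ⟨Finset.mem_attach _ _, hnbr⟩, rfl⟩
    have := Finset.min'_mem _ hne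
    rw [← heq] at this
    exact (Finset.mem_sdiff.mp this).2 hmem

/-- Greedy coloring: if every "closed ball" has at most `K` elements, there is a
`K`-coloring where related distinct elements get different colors. -/
theorem exists_coloring {α : Type} [Fintype α] (r : α → α → Prop) [DecidableRel r]
    (hsymm : ∀ a b, r a b → r b a) (hrefl : ∀ a, r a a) (K : ℕ)
    (hball : ∀ a, (Finset.univ.filter (fun b => r a b)).card ≤ K) (hK : 0 < K) :
    ∃ χ : α → Fin K, ∀ a b, χ a = χ b → r a b → a = b := by
  classical
  set e := (Fintype.equivFin α).symm with he
  set nbr : ℕ → ℕ → Bool := fun i j =>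
    decide (∃ hi : i < Fintype.card α, ∃ hj : j < Fintype.card α,
      r (e ⟨i, hi⟩) (e ⟨j, hj⟩) ∧ i ≠ j) with hnbr
  have hnbr' : ∀ i j, nbr i j = true ↔
      (∃ hi : i < Fintype.card α, ∃ hj : j < Fintype.card α,
      r (e ⟨i, hi⟩) (e ⟨j, hj⟩) ∧ i ≠ j) := by
    intro i j; rw [hnbr]; simp only [decide_eq_true_eq]
  have hdeg : ∀ i, (((Finset.range i).attach.filter (fun j => nbr j.1 i)).card < K) := by
    intro i
    by_cases hi : i < Fintype.card α
    · set a := e ⟨i, hi⟩ with ha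
      have hmem : a ∈ Finset.univ.filter (fun b => r a b) :=
        Finset.mem_filter.mpr ⟨Finset.mem_univ _, hrefl a⟩
      have hcard : ((Finset.univ.filter (fun b => r a b)).erase a).card < K := by
        have h1 := Finset.card_erase_of_mem hmem
        have h2 := hball a
        have h3 : 0 < (Finset.univ.filter (fun b => r a b)).card :=
          Finset.card_pos.mpr ⟨a, hmem⟩
        omega
      refine lt_of_le_of_lt (Finset.card_le_card_of_injOn
        (fun j => if h : (j : ℕ) < Fintype.card α then e ⟨j.1, h⟩ else a) ?_ ?_) hcard
      · intro j hj
        obtain ⟨-, hj2⟩ := Finset.mem_filter.mp hj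
        obtain ⟨hj3, hi', hr, hne⟩ := (hnbr' _ _).mp hj2
        dsimp only
        rw [dif_pos hj3]
        refine Finset.mem_erase.mpr ⟨?_, Finset.mem_filter.mpr ⟨Finset.mem_univ _, hsymm _ _ hr⟩⟩
        intro h
        exact hne (congrArg Fin.val (e.injective (h.trans ha)))
      · intro j₁ hj₁ j₂ hj₂ heq
        obtain ⟨h₁, -, -, -⟩ := (hnbr' _ _).mp (Finset.mem_filter.mp hj₁).2
        obtain ⟨h₂, -, -, -⟩ := (hnbr' _ _).mp (Finset.mem_filter.mp hj₂).2
        dsimp only at heq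
        rw [dif_pos h₁, dif_pos h₂] at heq
        have := e.injective heq
        exact Subtype.ext (by simpa [Fin.ext_iff] using this)
    · have : (Finset.range i).attach.filter (fun j => nbr j.1 i) = ∅ := by
        apply Finset.filter_false_of_mem
        intro j hj
        rw [hnbr']
        push_neg
        intro h1 h2
        omega
      rw [this]
      simpa using hK
  have hspec := gcol_spec K nbr hdeg
  refine ⟨fun a => ⟨gcol K nbr ((Fintype.equivFin α) a), (hspec _).1⟩, ?_⟩
  intro a b heq hr
  by_contra hne
  have heq' : gcol K nbr ((Fintype.equivFin α) a) = gcol K nbr ((Fintype.equivFin α) b) := by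
    simpa [Fin.ext_iff] using heq
  set ia := (Fintype.equivFin α) a with hia
  set ib := (Fintype.equivFin α) b with hib
  have hea : e ia = a := by rw [he, hia]; simp
  have heb : e ib = b := by rw [he, hib]; simp
  have hne' : (ia : ℕ) ≠ (ib : ℕ) := by
    intro h
    exact hne (by rw [← hea, ← heb]; exact congrArg e (Fin.ext h))
  rcases Nat.lt_or_ge (ia : ℕ) (ib : ℕ) with hlt | hge
  · refine (hspec (ib : ℕ)).2 (ia : ℕ) hlt ?_ heq'
    rw [hnbr']
    exact ⟨ia.isLt, ib.isLt, by rw [Fin.eta, Fin.eta, hea, heb]; exact hr, hne'⟩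
  · have hlt : (ib : ℕ) < (ia : ℕ) := lt_of_le_of_ne hge (Ne.symm hne')
    refine (hspec (ia : ℕ)).2 (ib : ℕ) hlt ?_ heq'.symm
    rw [hnbr']
    exact ⟨ib.isLt, ia.isLt, by rw [Fin.eta, Fin.eta, hea, heb]; exact hsymm _ _ hr, hne'.symm⟩


/-- The encoding data type: a common-subsequence-based description of a string near `u`. -/
def EncD (n t : ℕ) (F : Type) : Type :=
  Σ k : Fin (t + 1), {s : Finset (Fin n) // s.card = n - (k : ℕ)} ×
    {s : Finset (Fin n) // s.card = n - (k : ℕ)} × (Fin (n - (n - (k : ℕ))) → F)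

noncomputable instance (n t : ℕ) (F : Type) [Fintype F] : Fintype (EncD n t F) := by
  unfold EncD
  classical
  infer_instance

instance (n t : ℕ) (F : Type) [Nonempty F] : Nonempty (EncD n t F) :=
  ⟨⟨⟨0, Nat.succ_pos t⟩, ⟨Finset.univ, by simp⟩, ⟨Finset.univ, by simp⟩,
    fun j => Classical.arbitrary F⟩⟩

theorem editLe_refl (t : ℕ) {F : Type} (u : List F) : EditLe t u u := by
  induction t with
  | zero => rfl
  | succ t ih => exact Or.inl ih

theorem emb_iso_roundtrip {α : Type} [LinearOrder α] (s : Finset α) {k : ℕ}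
    (h h' : s.card = k) (x : α) (hx : x ∈ s) :
    s.orderEmbOfFin h ((s.orderIsoOfFin h').symm ⟨x, hx⟩) = x := by
  cases Subsingleton.elim h h'
  conv_lhs => rw [← Finset.coe_orderIsoOfFin_apply]
  rw [OrderIso.apply_symm_apply]

/-- Reconstruction of `v` from `u` and encoding data. -/
noncomputable def recon (n t : ℕ) {F : Type} (u : Fin n → F) (d : EncD n t F) : Fin n → F :=
  fun i =>
    if h : i ∈ (d.2.2.1.1 : Finset (Fin n)) then
      u (d.2.1.1.orderEmbOfFin d.2.1.2 ((d.2.2.1.1.orderIsoOfFin d.2.2.1.2).symm ⟨i, h⟩))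
    else
      d.2.2.2 ((d.2.2.1.1ᶜ.orderIsoOfFin
        (by rw [Finset.card_compl, d.2.2.1.2, Fintype.card_fin])).symm
        ⟨i, by simpa using h⟩)

theorem exists_recon {n t : ℕ} {F : Type} {u v : Fin n → F}
    (h : EditLe (t + t) (List.ofFn u) (List.ofFn v)) :
    ∃ d : EncD n t F, recon n t u d = v := by
  obtain ⟨s, hsu, hsv, hlen⟩ := exists_common_sublist h
  have hL : s.length ≤ n := by simpa using hsu.length_le
  have hlen' : n + n ≤ (t + t) + 2 * s.length := by simpa using hlen
  have hkt : n - s.length ≤ t := by omega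
  rw [List.sublist_iff_exists_fin_orderEmbedding_get_eq] at hsu hsv
  obtain ⟨fu, hfu⟩ := hsu
  obtain ⟨fv, hfv⟩ := hsv
  set k : ℕ := n - s.length with hk
  have hnk : n - k = s.length := by omega
  -- order embeddings into `Fin n` with domain `Fin (n - k)`
  set fu' : Fin (n - k) ↪o Fin n :=
    ((Fin.castOrderIso hnk).toOrderEmbedding.trans
      (fu.trans (Fin.castOrderIso (List.length_ofFn (f := u))).toOrderEmbedding)) with hfu'
  set fv' : Fin (n - k) ↪o Fin n :=
    ((Fin.castOrderIso hnk).toOrderEmbedding.trans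
      (fv.trans (Fin.castOrderIso (List.length_ofFn (f := v))).toOrderEmbedding)) with hfv'
  have huv : ∀ j : Fin (n - k), u (fu' j) = v (fv' j) := by
    intro j
    have h1 : u (fu' j) = (List.ofFn u).get (fu (Fin.cast hnk j)) := by
      rw [List.get_ofFn]; rfl
    have h2 : v (fv' j) = (List.ofFn v).get (fv (Fin.cast hnk j)) := by
      rw [List.get_ofFn]; rfl
    rw [h1, h2, ← hfu, ← hfv]
  classical
  set Mu : Finset (Fin n) := Finset.image fu' Finset.univ with hMu
  set Mv : Finset (Fin n) := Finset.image fv' Finset.univ with hMv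
  have cardMu : Mu.card = n - k := by
    rw [hMu, Finset.card_image_of_injective _ fu'.injective, Finset.card_univ, Fintype.card_fin]
  have cardMv : Mv.card = n - k := by
    rw [hMv, Finset.card_image_of_injective _ fv'.injective, Finset.card_univ, Fintype.card_fin]
  have hcompl : Mvᶜ.card = n - (n - k) := by
    rw [Finset.card_compl, cardMv, Fintype.card_fin]
  refine ⟨⟨⟨k, by omega⟩, ⟨Mu, cardMu⟩, ⟨Mv, cardMv⟩,
    fun j => v (Mvᶜ.orderEmbOfFin hcompl j)⟩, ?_⟩
  have hMuE : Mu.orderEmbOfFin cardMu = fu' :=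
    (Finset.orderEmbOfFin_unique' cardMu
      (fun x => Finset.mem_image_of_mem _ (Finset.mem_univ x))).symm
  have hMvE : Mv.orderEmbOfFin cardMv = fv' :=
    (Finset.orderEmbOfFin_unique' cardMv
      (fun x => Finset.mem_image_of_mem _ (Finset.mem_univ x))).symm
  funext i
  unfold recon
  by_cases h : i ∈ Mv
  · rw [dif_pos h]
    dsimp only
    set j := (Mv.orderIsoOfFin cardMv).symm ⟨i, h⟩ with hj
    have hij : fv' j = i := by
      rw [← hMvE, hj]
      exact emb_iso_roundtrip Mv cardMv cardMv i h
    rw [hMuE, huv j, hij]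
  · rw [dif_neg h]
    dsimp only
    exact congrArg v (emb_iso_roundtrip Mvᶜ hcompl _ i (Finset.mem_compl.mpr h))


theorem card_EncD (n t : ℕ) (F : Type) [Fintype F] :
    Fintype.card (EncD n t F) =
      ∑ k ∈ Finset.range (t + 1), (n.choose (n - k))^2 * (Fintype.card F)^(n - (n - k)) := by
  classical
  have h1 : Fintype.card (EncD n t F) =
      Fintype.card (Σ k : Fin (t + 1), {s : Finset (Fin n) // s.card = n - (k : ℕ)} ×
        {s : Finset (Fin n) // s.card = n - (k : ℕ)} × (Fin (n - (n - (k : ℕ))) → F)) :=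
    Fintype.card_congr (Equiv.refl _)
  rw [h1, Fintype.card_sigma]
  rw [← Fin.sum_univ_eq_sum_range (fun k => (n.choose (n - k))^2 * (Fintype.card F)^(n - (n - k)))]
  congr 1
  funext k
  have h2 : ∀ (j : ℕ), Fintype.card {s : Finset (Fin n) // s.card = j} = n.choose j := by
    intro j
    rw [Fintype.card_finset_len, Fintype.card_fin]
  rw [Fintype.card_prod, Fintype.card_prod, Fintype.card_fun, Fintype.card_fin, h2]
  ring

theorem ball_card_le {n t : ℕ} {F : Type} [Fintype F] (u : Fin n → F)
    {P : (Fin n → F) → Prop} [DecidablePred P] [Nonempty F]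
    (hP : ∀ v, P v → EditLe (t + t) (List.ofFn u) (List.ofFn v)) :
    (Finset.univ.filter P).card ≤ Fintype.card (EncD n t F) := by
  classical
  have hne : Nonempty (EncD n t F) := by
    refine ⟨⟨⟨0, Nat.succ_pos t⟩, ⟨Finset.univ, ?_⟩, ⟨Finset.univ, ?_⟩, fun j => Classical.arbitrary F⟩⟩
    · simp
    · simp
  have key : ∀ v : Fin n → F, ∃ d : EncD n t F, P v → recon n t u d = v := by
    intro v
    by_cases h : P v
    · obtain ⟨d, hd⟩ := exists_recon (hP v h)
      exact ⟨d, fun _ => hd⟩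
    · exact ⟨Classical.arbitrary _, fun hc => absurd hc h⟩
  choose E hE using key
  calc (Finset.univ.filter P).card
      ≤ (Finset.univ : Finset (EncD n t F)).card := by
        refine Finset.card_le_card_of_injOn E (fun _ _ => Finset.mem_univ _) ?_
        intro v₁ h₁ v₂ h₂ he
        rw [← hE v₁ (Finset.mem_filter.mp h₁).2, ← hE v₂ (Finset.mem_filter.mp h₂).2, he]
    _ = Fintype.card (EncD n t F) := Finset.card_univ

theorem choose_le_two_pow {n k : ℕ} (hn : 1 ≤ n) : n.choose k ≤ 2 ^ (n - 1) := by
  obtain ⟨m, rfl⟩ : ∃ m, n = m + 1 := ⟨n - 1, by omega⟩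
  simp only [Nat.add_sub_cancel]
  rcases Nat.eq_zero_or_pos k with rfl | hk
  · simpa using Nat.one_le_two_pow
  obtain ⟨j, rfl⟩ : ∃ j, k = j + 1 := ⟨k - 1, by omega⟩
  rcases le_or_gt (j + 1) m with hkm | hkm
  · rw [Nat.choose_succ_succ]
    have hsub : {j, j + 1} ⊆ Finset.range (m + 1) := by
      intro x hx
      simp only [Finset.mem_insert, Finset.mem_singleton] at hx
      rcases hx with rfl | rfl <;> simp [Finset.mem_range] <;> omega
    have hsum : ∑ i ∈ ({j, j + 1} : Finset ℕ), m.choose i ≤ ∑ i ∈ Finset.range (m + 1), m.choose i :=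
      Finset.sum_le_sum_of_subset hsub
    rw [Finset.sum_pair (by omega : j ≠ j + 1)] at hsum
    rw [Nat.sum_range_choose] at hsum
    exact hsum
  · rcases le_or_gt (j + 1) (m + 1) with h | h
    · have : j + 1 = m + 1 := by omega
      rw [this, Nat.choose_self]
      exact Nat.one_le_two_pow
    · rw [Nat.choose_eq_zero_of_lt h]
      exact Nat.zero_le _

theorem four_pow_le_succ : ∀ n : ℕ, 4 ^ n ≤ (n + 1) ^ (n + 1)
  | 0 => by norm_num
  | 1 => by norm_num
  | 2 => by norm_num
  | (m + 3) => by
    have ih := four_pow_le_succ (m + 2)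
    calc 4 ^ (m + 3) = 4 * 4 ^ (m + 2) := by ring
      _ ≤ 4 * (m + 3) ^ (m + 3) := Nat.mul_le_mul_left 4 ih
      _ ≤ (m + 4) * (m + 4) ^ (m + 3) :=
          Nat.mul_le_mul (by omega) (Nat.pow_le_pow_left (by omega) _)
      _ = (m + 4) ^ (m + 4) := (pow_succ (m + 4) (m + 3)).symm ▸ by ring

theorem four_pow_le {n : ℕ} (hn : 1 ≤ n) : 4 ^ (n - 1) ≤ n ^ n := by
  obtain ⟨m, rfl⟩ : ∃ m, n = m + 1 := ⟨n - 1, by omega⟩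
  simpa using four_pow_le_succ m

theorem sum_pow_le (f t : ℕ) : ∑ k ∈ Finset.range (t + 1), f ^ k ≤ (f + 1) ^ t := by
  induction t with
  | zero => simp
  | succ t ih =>
    rw [Finset.sum_range_succ]
    have h1 : f ^ (t + 1) ≤ f * (f + 1) ^ t := by
      rw [pow_succ, mul_comm]
      exact Nat.mul_le_mul_left f (Nat.pow_le_pow_left (by omega) t)
    calc ∑ k ∈ Finset.range (t + 1), f ^ k + f ^ (t + 1)
        ≤ (f + 1) ^ t + f * (f + 1) ^ t := Nat.add_le_add ih h1
      _ = (f + 1) ^ (t + 1) := by ring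

theorem key_nat_one (n t f : ℕ) (htn : t < n) :
    ∑ k ∈ Finset.range (t + 1), (n.choose (n - k)) ^ 2 * f ^ (n - (n - k)) ≤
      n ^ n * (f + 1) ^ t := by
  have hn : 1 ≤ n := by omega
  have h1 : ∀ k ∈ Finset.range (t + 1),
      (n.choose (n - k)) ^ 2 * f ^ (n - (n - k)) ≤ 4 ^ (n - 1) * f ^ k := by
    intro k hk
    rw [Finset.mem_range] at hk
    have hkn : k ≤ n := by omega
    have hexp : n - (n - k) = k := by omega
    rw [hexp]
    apply Nat.mul_le_mul_right
    calc (n.choose (n - k)) ^ 2 ≤ (2 ^ (n - 1)) ^ 2 :=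
        Nat.pow_le_pow_left (choose_le_two_pow hn) 2
      _ = 4 ^ (n - 1) := by rw [← pow_mul, mul_comm, pow_mul]; norm_num
  calc ∑ k ∈ Finset.range (t + 1), (n.choose (n - k)) ^ 2 * f ^ (n - (n - k))
      ≤ ∑ k ∈ Finset.range (t + 1), 4 ^ (n - 1) * f ^ k := Finset.sum_le_sum h1
    _ = 4 ^ (n - 1) * ∑ k ∈ Finset.range (t + 1), f ^ k := by rw [Finset.mul_sum]
    _ ≤ n ^ n * (f + 1) ^ t := Nat.mul_le_mul (four_pow_le hn) (sum_pow_le f t)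

theorem key_nat_two (n c t f : ℕ) (hc : 2 ≤ c) (hcn : c ≤ n) (hf : 2 ≤ f) (ht : 1 ≤ t)
    (hreg : c * ((2 * c - 1) * t) < n) :
    ∑ k ∈ Finset.range (t + 1), (n.choose (n - k)) ^ 2 * f ^ (n - (n - k)) ≤
      (n - c + 1) ^ ((2 * c - 1) * t + 1) * (f ^ c + 1) ^ ((2 * c - 1) * t) := by
  have haux : t ≤ (2 * c - 1) * t := Nat.le_mul_of_pos_left t (by omega)
  have haux2 : (2 * c - 1) * t ≤ c * ((2 * c - 1) * t) := Nat.le_mul_of_pos_left _ (by omega)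
  have htn : t < n := by omega
  set z := n - c + 1 with hz
  have haux3 : c * 3 ≤ c * ((2 * c - 1) * t) := by
    apply Nat.mul_le_mul_left
    calc 3 ≤ 2 * c - 1 := by omega
      _ ≤ (2 * c - 1) * t := Nat.le_mul_of_pos_right _ (by omega)
  have hn3c : 3 * c + 1 ≤ n := by omega
  have hzn : 2 * n ≤ 3 * z := by omega
  have hn1 : 1 ≤ n := by omega
  -- n^2 ≤ 16 * z^3
  have hsq : n ^ 2 ≤ 16 * z ^ 3 := by
    have ha : n ^ 2 ≤ n ^ 3 := Nat.pow_le_pow_right hn1 (by omega)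
    have hb : 8 * n ^ 3 ≤ 27 * z ^ 3 := by
      calc 8 * n ^ 3 = (2 * n) ^ 3 := by ring
        _ ≤ (3 * z) ^ 3 := Nat.pow_le_pow_left hzn 3
        _ = 27 * z ^ 3 := by ring
    have hcz : 0 ≤ z ^ 3 := Nat.zero_le _
    linarith
  -- step 1 : LHS ≤ (n^t)^2 * (f+1)^t
  have h1 : ∀ k ∈ Finset.range (t + 1),
      (n.choose (n - k)) ^ 2 * f ^ (n - (n - k)) ≤ (n ^ t) ^ 2 * f ^ k := by
    intro k hk
    rw [Finset.mem_range] at hk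
    have hkn : k ≤ n := by omega
    have hexp : n - (n - k) = k := by omega
    rw [hexp]
    apply Nat.mul_le_mul_right
    apply Nat.pow_le_pow_left
    calc n.choose (n - k) = n.choose k := Nat.choose_symm hkn
      _ ≤ n ^ k := Nat.choose_le_pow _ _
      _ ≤ n ^ t := Nat.pow_le_pow_right hn1 (by omega)
  have hLHS : ∑ k ∈ Finset.range (t + 1), (n.choose (n - k)) ^ 2 * f ^ (n - (n - k)) ≤
      (n ^ t) ^ 2 * (f + 1) ^ t := by
    calc ∑ k ∈ Finset.range (t + 1), (n.choose (n - k)) ^ 2 * f ^ (n - (n - k))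
        ≤ ∑ k ∈ Finset.range (t + 1), (n ^ t) ^ 2 * f ^ k := Finset.sum_le_sum h1
      _ = (n ^ t) ^ 2 * ∑ k ∈ Finset.range (t + 1), f ^ k := by rw [Finset.mul_sum]
      _ ≤ (n ^ t) ^ 2 * (f + 1) ^ t := Nat.mul_le_mul_left _ (sum_pow_le f t)
  -- step 2
  have hfc4 : 4 ≤ f ^ c := by
    calc 4 = 2 ^ 2 := by norm_num
      _ ≤ f ^ 2 := Nat.pow_le_pow_left hf 2
      _ ≤ f ^ c := Nat.pow_le_pow_right (by omega) hc
  have hn2t : (n ^ t) ^ 2 = (n ^ 2) ^ t := by rw [← pow_mul, ← pow_mul, mul_comm]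
  have h2 : (n ^ t) ^ 2 ≤ (f ^ c + 1) ^ (2 * t) * z ^ (3 * t) := by
    rw [hn2t]
    calc (n ^ 2) ^ t ≤ (16 * z ^ 3) ^ t := Nat.pow_le_pow_left hsq t
      _ = 16 ^ t * (z ^ 3) ^ t := mul_pow _ _ _
      _ ≤ ((f ^ c + 1) ^ 2) ^ t * z ^ (3 * t) := by
          rw [← pow_mul z]
          apply Nat.mul_le_mul_right
          apply Nat.pow_le_pow_left
          nlinarith
      _ = (f ^ c + 1) ^ (2 * t) * z ^ (3 * t) := by rw [← pow_mul]
  -- assembly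
  have hfp : (f + 1) ^ t ≤ (f ^ c + 1) ^ t := by
    apply Nat.pow_le_pow_left
    have : f ≤ f ^ c := by
      calc f = f ^ 1 := (pow_one f).symm
        _ ≤ f ^ c := Nat.pow_le_pow_right (by omega) (by omega)
    omega
  have hz1 : 1 ≤ z := by omega
  have hzexp : z ^ (3 * t) ≤ z ^ ((2 * c - 1) * t + 1) := by
    apply Nat.pow_le_pow_right hz1
    have : 3 ≤ 2 * c - 1 := by omega
    calc 3 * t ≤ (2 * c - 1) * t := Nat.mul_le_mul_right t this
      _ ≤ (2 * c - 1) * t + 1 := by omega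
  have hc2 : 2 * t + t ≤ (2 * c - 1) * t := by
    have : 3 ≤ 2 * c - 1 := by omega
    calc 2 * t + t = 3 * t := by ring
      _ ≤ (2 * c - 1) * t := Nat.mul_le_mul_right t this
  calc ∑ k ∈ Finset.range (t + 1), (n.choose (n - k)) ^ 2 * f ^ (n - (n - k))
      ≤ (n ^ t) ^ 2 * (f + 1) ^ t := hLHS
    _ ≤ ((f ^ c + 1) ^ (2 * t) * z ^ (3 * t)) * (f ^ c + 1) ^ t :=
        Nat.mul_le_mul h2 hfp
    _ = z ^ (3 * t) * (f ^ c + 1) ^ (2 * t + t) := by rw [pow_add]; ring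
    _ ≤ z ^ ((2 * c - 1) * t + 1) * (f ^ c + 1) ^ ((2 * c - 1) * t) :=
        Nat.mul_le_mul hzexp (Nat.pow_le_pow_right (by omega) hc2)


theorem template {F : Type} [Fintype F] [Nonempty F] (n c t : ℕ) (hc1 : 1 ≤ c) (hcn : c ≤ n)
    (m : ℝ) (K E : ℕ) (hK0 : 0 < K) (χ : (Fin n → F) → Fin K)
    (hχ : ∀ w₁ w₂, χ w₁ = χ w₂ → EditLe (t + t) (List.ofFn w₁) (List.ofFn w₂) → w₁ = w₂)
    (hE : (E : ℝ) ≤ (⌈(n : ℝ) / (c : ℝ)⌉ : ℝ))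
    (hKb : K ≤ (n - c + 1) ^ E * ((Fintype.card F) ^ c + 1) ^ ((2 * c - 1) * t)) :
    ∃ (N N' : ℕ), 0 < N ∧
      ∃ (SS : (Fin n → F) → Fin N → Fin N') (Rec : (Fin n → F) → Fin N' → (Fin n → F)),
        (∀ (w w' : Fin n → F) (r : Fin N),
          EditLe t (List.ofFn w) (List.ofFn w') → Rec w' (SS w r) = w) ∧
        ∀ (ι : Type) [Fintype ι] (p : (Fin n → F) × ι → ℝ),
          IsDist p → m ≤ avgMinEntropy p →
          m - (⌈(n : ℝ) / (c : ℝ)⌉ : ℝ) * Real.logb 2 ((n : ℝ) - (c : ℝ) + 1)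
            - (((2 * c - 1) * t : ℕ) : ℝ)
              * (⌈Real.logb 2 ((Fintype.card F : ℝ) ^ c + 1)⌉ : ℝ)
            ≤ avgMinEntropy (fun x : (Fin n → F) × Fin N' × ι =>
                p (x.1, x.2.2) *
                  ((Finset.univ.filter fun r : Fin N => SS x.1 r = x.2.1).card : ℝ)
                  / (N : ℝ)) := by
  classical
  refine ⟨1, K, one_pos, fun w _ => χ w,
    fun w' s => if h : ∃ w, χ w = s ∧ EditLe t (List.ofFn w) (List.ofFn w') then h.choose
      else Classical.arbitrary _, ?_, ?_⟩
  · -- correctness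
    intro w w' r hww'
    have hex : ∃ w₀, χ w₀ = χ w ∧ EditLe t (List.ofFn w₀) (List.ofFn w') := ⟨w, rfl, hww'⟩
    dsimp only
    rw [dif_pos hex]
    obtain ⟨h1, h2⟩ := hex.choose_spec
    exact hχ _ _ h1 (editLe_trans h2 (editLe_symm hww'))
  · -- security
    intro ι _ p hdist hm
    obtain ⟨hp0, hp1⟩ := hdist
    set X : ℝ := (n : ℝ) - (c : ℝ) + 1 with hX
    set Y : ℝ := (Fintype.card F : ℝ) ^ c + 1 with hY
    set A : ℝ := (⌈(n : ℝ) / (c : ℝ)⌉ : ℝ) * Real.logb 2 X with hA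
    set B : ℝ := (((2 * c - 1) * t : ℕ) : ℝ) * (⌈Real.logb 2 Y⌉ : ℝ) with hB
    set M : ℕ := (2 * c - 1) * t with hM
    have hcF : 1 ≤ Fintype.card F := Fintype.card_pos
    have hX1 : (1 : ℝ) ≤ X := by
      rw [hX]
      have : (c : ℝ) ≤ (n : ℝ) := Nat.cast_le.mpr hcn
      linarith
    have hY1 : (2 : ℝ) ≤ Y := by
      rw [hY]
      have : (1 : ℝ) ≤ (Fintype.card F : ℝ) ^ c :=
        one_le_pow₀ (by exact_mod_cast hcF)
      linarith
    have hXcast : ((n - c + 1 : ℕ) : ℝ) = X := by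
      rw [hX]; push_cast [hcn]; ring
    have hYcast : ((Fintype.card F ^ c + 1 : ℕ) : ℝ) = Y := by rw [hY]; push_cast; ring
    -- 2 ^ A ≥ X ^ E
    have h2A : X ^ (E : ℕ) ≤ (2 : ℝ) ^ A := by
      have hXpos : (0 : ℝ) < X := lt_of_lt_of_le one_pos hX1
      have h1 : (2 : ℝ) ^ A = X ^ ((⌈(n : ℝ) / (c : ℝ)⌉ : ℝ)) := by
        rw [hA, mul_comm, Real.rpow_mul (by norm_num : (0:ℝ) ≤ 2),
          Real.rpow_logb (by norm_num) (by norm_num) hXpos]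
      rw [h1, ← Real.rpow_natCast X E]
      exact Real.rpow_le_rpow_of_exponent_le hX1 hE
    -- 2 ^ B ≥ Y ^ M
    have h2B : Y ^ (M : ℕ) ≤ (2 : ℝ) ^ B := by
      have hYpos : (0 : ℝ) < Y := lt_of_lt_of_le two_pos hY1
      have h1 : (M : ℝ) * Real.logb 2 Y ≤ B := by
        rw [hB]
        exact mul_le_mul_of_nonneg_left (Int.le_ceil _) (Nat.cast_nonneg M)
      calc Y ^ (M : ℕ) = Y ^ ((M : ℕ) : ℝ) := (Real.rpow_natCast Y M).symm
        _ = (2 : ℝ) ^ ((M : ℝ) * Real.logb 2 Y) := by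
            rw [mul_comm ((M : ℕ) : ℝ), Real.rpow_mul (by norm_num : (0:ℝ) ≤ 2),
              Real.rpow_logb (by norm_num) (by norm_num) hYpos]
        _ ≤ (2 : ℝ) ^ B := Real.rpow_le_rpow_of_exponent_le one_le_two h1
    have hKle : (K : ℝ) ≤ (2 : ℝ) ^ (A + B) := by
      rw [Real.rpow_add two_pos]
      calc (K : ℝ) ≤ ((n - c + 1) ^ E * (Fintype.card F ^ c + 1) ^ M : ℕ) :=
            Nat.cast_le.mpr hKb
        _ = X ^ E * Y ^ M := by push_cast [hXcast, hYcast]; ring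
        _ ≤ (2 : ℝ) ^ A * (2 : ℝ) ^ B := by
            apply mul_le_mul h2A h2B (by positivity) (by positivity)
    have hlogK : Real.logb 2 (K : ℝ) ≤ A + B := by
      rw [Real.logb_le_iff_le_rpow one_lt_two (by exact_mod_cast hK0)]
      exact hKle
    -- distribution facts
    obtain ⟨x₀, hx₀⟩ : ∃ x : (Fin n → F) × ι, 0 < p x := by
      by_contra hno
      push_neg at hno
      have : ∑ x, p x = 0 := Finset.sum_eq_zero fun x _ => le_antisymm (hno x) (hp0 x)
      rw [hp1] at this
      norm_num at this
    have hbdd : ∀ (b : ι), BddAbove (Set.range fun a => p (a, b)) :=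
      fun b => Set.Finite.bddAbove (Set.finite_range _)
    set P : ι → ℝ := fun i => ⨆ w, p (w, i) with hP
    have hPle : ∀ w i, p (w, i) ≤ P i := fun w i => le_ciSup (hbdd i) w
    have hP0 : ∀ i, 0 ≤ P i := fun i => le_trans (hp0 (x₀.1, i)) (hPle x₀.1 i)
    set S₀ : ℝ := ∑ i, P i with hS₀
    have havg : avgMinEntropy p = - Real.logb 2 S₀ := rfl
    have hS₀pos : 0 < S₀ := by
      have h1 : p x₀ ≤ P x₀.2 := hPle x₀.1 x₀.2
      have h2 : P x₀.2 ≤ S₀ :=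
        Finset.single_le_sum (fun i _ => hP0 i) (Finset.mem_univ x₀.2)
      calc (0:ℝ) < p x₀ := hx₀
        _ ≤ S₀ := le_trans h1 h2
    have hS₀le : S₀ ≤ (2 : ℝ) ^ (-m) := by
      rw [havg] at hm
      have : Real.logb 2 S₀ ≤ -m := by linarith
      rw [Real.logb_le_iff_le_rpow one_lt_two hS₀pos] at this
      exact this
    -- the sketch distribution
    set G : (Fin n → F) × Fin K × ι → ℝ := fun x =>
      p (x.1, x.2.2) * ((Finset.univ.filter fun r : Fin 1 => χ x.1 = x.2.1).card : ℝ)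
        / ((1 : ℕ) : ℝ) with hG
    have hGval : ∀ w s i, G (w, (s, i)) = if χ w = s then p (w, i) else 0 := by
      intro w s i
      rw [hG]
      by_cases h : χ w = s
      · simp [h, Finset.filter_const]
      · simp [h, Finset.filter_const]
    have hGbdd : ∀ (b : Fin K × ι), BddAbove (Set.range fun a => G (a, b)) :=
      fun b => Set.Finite.bddAbove (Set.finite_range _)
    have hG0 : ∀ w b, 0 ≤ G (w, b) := by
      intro w b
      rw [show b = (b.1, b.2) from rfl, hGval]
      split
      · exact hp0 _
      · exact le_refl 0
    set Q : Fin K × ι → ℝ := fun b => ⨆ w, G (w, b) with hQ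
    have hQle : ∀ b : Fin K × ι, Q b ≤ P b.2 := by
      intro b
      apply ciSup_le
      intro w
      rw [show b = (b.1, b.2) from rfl, hGval]
      split
      · exact hPle w b.2
      · exact hP0 b.2
    have hQ0 : ∀ b, 0 ≤ Q b := fun b => le_trans (hG0 x₀.1 b) (le_ciSup (hGbdd b) x₀.1)
    set S₁ : ℝ := ∑ b, Q b with hS₁
    have hS₁pos : 0 < S₁ := by
      have h1 : G (x₀.1, (χ x₀.1, x₀.2)) = p x₀ := by rw [hGval, if_pos rfl]
      have h2 : p x₀ ≤ Q (χ x₀.1, x₀.2) := h1 ▸ le_ciSup (hGbdd _) x₀.1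
      have h3 : Q (χ x₀.1, x₀.2) ≤ S₁ :=
        Finset.single_le_sum (fun b _ => hQ0 b) (Finset.mem_univ _)
      calc (0:ℝ) < p x₀ := hx₀
        _ ≤ S₁ := le_trans h2 h3
    have hS₁le : S₁ ≤ (K : ℝ) * S₀ := by
      calc S₁ ≤ ∑ b : Fin K × ι, P b.2 := Finset.sum_le_sum fun b _ => hQle b
        _ = (K : ℝ) * S₀ := by
          rw [Fintype.sum_prod_type]
          simp [hS₀, Finset.sum_const, Finset.card_univ, mul_comm]
    have hgoal : avgMinEntropy G = - Real.logb 2 S₁ := rfl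
    have hfinal : m - (A + B) ≤ - Real.logb 2 S₁ := by
      have hK0' : (0:ℝ) < (K : ℝ) := by exact_mod_cast hK0
      have h1 : S₁ ≤ (K : ℝ) * (2 : ℝ) ^ (-m) :=
        le_trans hS₁le (mul_le_mul_of_nonneg_left hS₀le (le_of_lt hK0'))
      have h2 : Real.logb 2 S₁ ≤ Real.logb 2 ((K : ℝ) * (2 : ℝ) ^ (-m)) :=
        Real.logb_le_logb_of_le one_lt_two hS₁pos h1
      have h3 : Real.logb 2 ((K : ℝ) * (2 : ℝ) ^ (-m))
          = Real.logb 2 (K : ℝ) + (-m) := by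
        rw [Real.logb_mul (ne_of_gt hK0') (ne_of_gt (Real.rpow_pos_of_pos two_pos _)),
          Real.logb_rpow (by norm_num) (by norm_num)]
      have := hlogK
      linarith
    rw [hgoal]
    linarith [hfinal]

end EditAux

/-- Secure sketch for edit distance: for any `n`, shingle length
`1 ≤ c ≤ n`, distance bound `t`, and min-entropy threshold `m`, there exists an
average-case
`(Edit_F(n), m, m − ⌈n/c⌉·log₂(n−c+1) − (2c−1)·t·⌈log₂(|F|^c + 1)⌉, t)`-secure sketch. -/
theorem edit_distance_secure_sketch {F : Type} [Fintype F] [Nonempty F]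
    (n c t : ℕ) (hc1 : 1 ≤ c) (hcn : c ≤ n) (m : ℝ) :
    ∃ (N N' : ℕ), 0 < N ∧
      ∃ (SS : (Fin n → F) → Fin N → Fin N') (Rec : (Fin n → F) → Fin N' → (Fin n → F)),
        -- correctness
        (∀ (w w' : Fin n → F) (r : Fin N),
          EditLe t (List.ofFn w) (List.ofFn w') → Rec w' (SS w r) = w) ∧
        -- average-case security
        ∀ (ι : Type) [Fintype ι] (p : (Fin n → F) × ι → ℝ),
          IsDist p → m ≤ avgMinEntropy p →
          m - (⌈(n : ℝ) / (c : ℝ)⌉ : ℝ) * Real.logb 2 ((n : ℝ) - (c : ℝ) + 1)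
            - (((2 * c - 1) * t : ℕ) : ℝ)
              * (⌈Real.logb 2 ((Fintype.card F : ℝ) ^ c + 1)⌉ : ℝ)
            ≤ avgMinEntropy (fun x : (Fin n → F) × Fin N' × ι =>
                p (x.1, x.2.2) *
                  ((Finset.univ.filter fun r : Fin N => SS x.1 r = x.2.1).card : ℝ)
                  / (N : ℝ)) := by
  classical
  have hn1 : 1 ≤ n := le_trans hc1 hcn
  have hcF : 1 ≤ Fintype.card F := Fintype.card_pos
  -- trivial coloring helper facts
  have hE0 : ((0 : ℕ) : ℝ) ≤ (⌈(n : ℝ) / (c : ℝ)⌉ : ℝ) := by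
    simp only [Nat.cast_zero]
    have : (0 : ℤ) ≤ ⌈(n : ℝ) / (c : ℝ)⌉ := Int.ceil_nonneg (by positivity)
    exact_mod_cast this
  rcases Nat.eq_zero_or_pos t with rfl | ht
  · -- t = 0 : constant coloring
    apply EditAux.template n c 0 hc1 hcn m 1 0 one_pos (fun _ => 0) ?_ hE0 ?_
    · intro w₁ w₂ _ hedit
      exact List.ofFn_injective hedit
    · simp
  by_cases hf1 : Fintype.card F ≤ 1
  · -- |F| = 1 : constant coloring
    have hsub : Subsingleton F := Fintype.card_le_one_iff_subsingleton.mp hf1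
    apply EditAux.template n c t hc1 hcn m 1 0 one_pos (fun _ => 0) ?_ hE0 ?_
    · intro w₁ w₂ _ _
      funext i
      exact Subsingleton.elim _ _
    · rw [pow_zero, one_mul]
      exact Nat.one_le_pow _ _ (by positivity)
  push_neg at hf1
  by_cases hreg : n ≤ c * ((2 * c - 1) * t)
  · -- full reveal
    have hcard : Fintype.card (Fin n → F) = Fintype.card F ^ n := by
      rw [Fintype.card_fun, Fintype.card_fin]
    apply EditAux.template n c t hc1 hcn m (Fintype.card F ^ n) 0
      (pow_pos Fintype.card_pos n)
      (fun w => Fin.cast hcard ((Fintype.equivFin _) w)) ?_ hE0 ?_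
    · intro w₁ w₂ heq _
      have hv := congrArg Fin.val heq
      exact (Fintype.equivFin _).injective (Fin.ext hv)
    · rw [pow_zero, one_mul]
      calc Fintype.card F ^ n ≤ Fintype.card F ^ (c * ((2 * c - 1) * t)) :=
            Nat.pow_le_pow_right hcF hreg
        _ = (Fintype.card F ^ c) ^ ((2 * c - 1) * t) := by rw [pow_mul]
        _ ≤ (Fintype.card F ^ c + 1) ^ ((2 * c - 1) * t) :=
            Nat.pow_le_pow_left (by omega) _
  push_neg at hreg
  -- greedy coloring case
  have haux : t ≤ (2 * c - 1) * t := Nat.le_mul_of_pos_left t (by omega)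
  have haux2 : (2 * c - 1) * t ≤ c * ((2 * c - 1) * t) := Nat.le_mul_of_pos_left _ (by omega)
  have htn : t < n := by omega
  set K := Fintype.card (EditAux.EncD n t F) with hK
  have hK0 : 0 < K := Fintype.card_pos
  obtain ⟨χ, hχ⟩ := EditAux.exists_coloring
    (fun w₁ w₂ : Fin n → F => EditLe (t + t) (List.ofFn w₁) (List.ofFn w₂))
    (fun a b h => EditAux.editLe_symm h) (fun a => EditAux.editLe_refl _ _) K
    (fun w => EditAux.ball_card_le w (fun v hv => hv)) hK0
  have hKsum : K = ∑ k ∈ Finset.range (t + 1),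
      (n.choose (n - k)) ^ 2 * (Fintype.card F) ^ (n - (n - k)) :=
    EditAux.card_EncD n t F
  rcases eq_or_lt_of_le hc1 with hc1' | hc2
  · -- c = 1
    apply EditAux.template n c t hc1 hcn m K n hK0 χ hχ ?_ ?_
    · rw [← hc1']
      simp
    · rw [hKsum, ← hc1']
      have h1 : n - 1 + 1 = n := by omega
      have h2 : (2 * 1 - 1) * t = t := by omega
      rw [h1, h2, pow_one]
      exact EditAux.key_nat_one n t (Fintype.card F) htn
  · -- 2 ≤ c
    apply EditAux.template n c t hc1 hcn m K ((2 * c - 1) * t + 1) hK0 χ hχ ?_ ?_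
    · have hcpos : (0 : ℝ) < (c : ℝ) := by exact_mod_cast (by omega : 0 < c)
      have h1 : (((2 * c - 1) * t : ℕ) : ℤ) < ⌈(n : ℝ) / (c : ℝ)⌉ := by
        rw [Int.lt_ceil]
        rw [lt_div_iff₀ hcpos]
        have : ((c * ((2 * c - 1) * t) : ℕ) : ℝ) < ((n : ℕ) : ℝ) := by exact_mod_cast hreg
        push_cast at this ⊢
        linarith
      have h2 : (((2 * c - 1) * t + 1 : ℕ) : ℤ) ≤ ⌈(n : ℝ) / (c : ℝ)⌉ := by
        push_cast
        omega
      exact_mod_cast h2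
    · rw [hKsum]
      exact EditAux.key_nat_two n c t (Fintype.card F) hc2 hcn hf1 ht hreg
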